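/- arXiv:2009.06038 — 2 statements merged into one kernel-verified Lean document; each statement's English description precedes it below -/
import Mathlib

section
/- Let ρ be a symmetric operator on an n-dimensional real inner product space (n ≥ 2) with trace S. If σ₁(B) > 0 and σ₂(B) > 0 for B = S·id − (n−1)·ρ, then Ein_{n/2} = S·id − (n/2)·ρ is positive definite. -/
open RealInnerProductSpace

set_option maxHeartbeats 1600000

lemma trace_eq_sum_inner' {E : Type*} [NormedAddCommGroup E] [InnerProductSpace ℝ E]
    [FiniteDimensional ℝ E] {ι : Type*} [Fintype ι] [DecidableEq ι]
    (b : OrthonormalBasis ι ℝ E) (T : E →ₗ[ℝ] E) :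
    LinearMap.trace ℝ E T = ∑ i, ⟪T (b i), b i⟫ := by
  rw [LinearMap.trace_eq_matrix_trace ℝ b.toBasis, Matrix.trace]
  congr 1
  ext i
  rw [Matrix.diag_apply, LinearMap.toMatrix_apply, b.coe_toBasis_repr_apply,
    b.repr_apply_apply, b.coe_toBasis, real_inner_comm]

lemma inner_sq_le_trace_comp {E : Type*} [NormedAddCommGroup E] [InnerProductSpace ℝ E]
    [FiniteDimensional ℝ E] (A : E →ₗ[ℝ] E) (hA : A.IsSymmetric) (u : E) (hu : ‖u‖ = 1) :
    ⟪A u, u⟫ ^ 2 ≤ LinearMap.trace ℝ E (A ∘ₗ A) := by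
  classical
  have horth : Orthonormal ℝ ((↑) : ({u} : Set E) → E) := by
    constructor
    · rintro ⟨x, hx⟩
      rw [Set.mem_singleton_iff] at hx
      simp only [hx]; exact hu
    · rintro ⟨x, hx⟩ ⟨y, hy⟩ hxy
      exact absurd (Subtype.ext (hx.trans hy.symm)) hxy
  obtain ⟨s, b, hsub, hb⟩ := horth.exists_orthonormalBasis_extension
  have hmem : u ∈ s := hsub rfl
  rw [trace_eq_sum_inner' b]
  have h1 : ∀ i : s, ⟪(A ∘ₗ A) (b i), b i⟫ = ‖A (b i)‖ ^ 2 := by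
    intro i
    rw [LinearMap.comp_apply, hA (A (b i)) (b i), real_inner_self_eq_norm_sq]
  have habs : |⟪A u, u⟫| ≤ ‖A u‖ := by
    have := abs_real_inner_le_norm (A u) u
    rwa [hu, mul_one] at this
  have h2 : ⟪A u, u⟫ ^ 2 ≤ ‖A u‖ ^ 2 := by
    rw [← sq_abs]
    exact pow_le_pow_left₀ (abs_nonneg _) habs 2
  have hux : b ⟨u, hmem⟩ = u := by rw [hb]
  calc ⟪A u, u⟫ ^ 2 ≤ ‖A u‖ ^ 2 := h2
    _ = ⟪(A ∘ₗ A) (b ⟨u, hmem⟩), b ⟨u, hmem⟩⟫ := by rw [h1 ⟨u, hmem⟩, hux]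
    _ ≤ ∑ i, ⟪(A ∘ₗ A) (b i), b i⟫ := by
        apply Finset.single_le_sum (f := fun i => ⟪(A ∘ₗ A) (b i), b i⟫)
        · intro i _
          rw [h1 i]; positivity
        · exact Finset.mem_univ _

/-- If `σ₁(B) > 0` and `σ₂(B) > 0` for `B = S•id - (n-1)•ρ` (`n ≥ 2`),
then `Ein_{n/2} = S•id - (n/2)•ρ` is positive definite. -/
theorem stmt_10 {E : Type*} [NormedAddCommGroup E] [InnerProductSpace ℝ E]
    [FiniteDimensional ℝ E] {n : ℕ} (hn : Module.finrank ℝ E = n) (hn2 : 2 ≤ n)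
    (ρ : E →ₗ[ℝ] E) (hρ : ρ.IsSymmetric) (S : ℝ) (hS : S = LinearMap.trace ℝ E ρ)
    (B : E →ₗ[ℝ] E) (hB : B = S • (LinearMap.id : E →ₗ[ℝ] E) - ((n : ℝ) - 1) • ρ)
    (hσ1 : 0 < LinearMap.trace ℝ E B)
    (hσ2 : 0 < ((LinearMap.trace ℝ E B) ^ 2 - LinearMap.trace ℝ E (B ∘ₗ B)) / 2) :
    ∀ v : E, v ≠ 0 →
      0 < ⟪(S • (LinearMap.id : E →ₗ[ℝ] E) - ((n : ℝ) / 2) • ρ) v, v⟫ := by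
  have hn' : (2 : ℝ) ≤ (n : ℝ) := by exact_mod_cast hn2
  have hn0 : (n : ℝ) ≠ 0 := by positivity
  have tid : LinearMap.trace ℝ E (LinearMap.id : E →ₗ[ℝ] E) = (n : ℝ) := by
    rw [LinearMap.trace_id, hn]
  set t : ℝ := LinearMap.trace ℝ E (ρ ∘ₗ ρ) with ht
  clear_value t
  have trB : LinearMap.trace ℝ E B = S := by
    rw [hB, map_sub, map_smul, map_smul, tid, ← hS, smul_eq_mul, smul_eq_mul]
    ring
  have trB2 : LinearMap.trace ℝ E (B ∘ₗ B) = (2 - (n : ℝ)) * S ^ 2 + ((n : ℝ) - 1) ^ 2 * t := by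
    rw [hB]
    simp only [LinearMap.sub_comp, LinearMap.comp_sub, LinearMap.smul_comp,
      LinearMap.comp_smul, LinearMap.id_comp, LinearMap.comp_id, map_sub, map_smul,
      smul_eq_mul, tid, ← hS, ← ht]
    ring
  set c : ℝ := (2 - (n : ℝ)) / n * S with hc
  clear_value c
  set Bb : E →ₗ[ℝ] E := c • (LinearMap.id : E →ₗ[ℝ] E) + ((n : ℝ) - 1) • ρ with hBb
  clear_value Bb
  have hBbsym : Bb.IsSymmetric := by
    intro x y
    simp only [hBb, LinearMap.add_apply, LinearMap.smul_apply, LinearMap.id_apply,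
      inner_add_left, inner_add_right, real_inner_smul_left, real_inner_smul_right]
    rw [hρ x y]
  have trBb2 : LinearMap.trace ℝ E (Bb ∘ₗ Bb) = LinearMap.trace ℝ E (B ∘ₗ B) := by
    rw [trB2, hBb]
    simp only [LinearMap.add_comp, LinearMap.comp_add, LinearMap.smul_comp,
      LinearMap.comp_smul, LinearMap.id_comp, LinearMap.comp_id, map_add, map_smul,
      smul_eq_mul, tid, ← hS, ← ht, hc]
    field_simp
    ring
  have hSpos : 0 < S := by rwa [trB] at hσ1
  have h2 : LinearMap.trace ℝ E (B ∘ₗ B) < S ^ 2 := by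
    rw [trB] at hσ2; linarith
  intro v hv
  set r : ℝ := ‖v‖ with hr
  clear_value r
  have hrpos : 0 < r := by rw [hr]; exact norm_pos_iff.mpr hv
  set u : E := r⁻¹ • v with hudef
  clear_value u
  have hu : ‖u‖ = 1 := by
    rw [hudef, hr, norm_smul, norm_inv, norm_norm, inv_mul_cancel₀ (norm_ne_zero_iff.mpr hv)]
  have hkey : ⟪Bb u, u⟫ ^ 2 ≤ LinearMap.trace ℝ E (Bb ∘ₗ Bb) :=
    inner_sq_le_trace_comp Bb hBbsym u hu
  rw [trBb2] at hkey
  have hlt : ⟪Bb u, u⟫ < S := by nlinarith [hkey, h2, hSpos]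
  set xu : ℝ := ⟪ρ u, u⟫ with hxu
  clear_value xu
  have hBbu : ⟪Bb u, u⟫ = c + ((n : ℝ) - 1) * xu := by
    simp only [hBb, LinearMap.add_apply, LinearMap.smul_apply, LinearMap.id_apply,
      inner_add_left, real_inner_smul_left, ← hxu]
    rw [real_inner_self_eq_norm_sq, hu]
    ring
  rw [hBbu, hc] at hlt
  -- from hlt : (2-n)/n * S + (n-1) * xu < S, get S - (n/2)*xu > 0
  have hnpos : (0 : ℝ) < (n : ℝ) := by linarith
  have hn1 : (0 : ℝ) < (n : ℝ) - 1 := by linarith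
  have h' : ((2 - (n : ℝ)) / n * S + ((n : ℝ) - 1) * xu) * n < S * n :=
    mul_lt_mul_of_pos_right hlt hnpos
  have hd : (2 - (n : ℝ)) / n * S * n = (2 - (n : ℝ)) * S := by field_simp
  have h'' : (2 - (n : ℝ)) * S + ((n : ℝ) - 1) * xu * n < S * n := by
    calc (2 - (n : ℝ)) * S + ((n : ℝ) - 1) * xu * n
        = ((2 - (n : ℝ)) / n * S + ((n : ℝ) - 1) * xu) * n := by field_simp
      _ < S * n := h'
  have h3 : ((n : ℝ) - 1) * ((n : ℝ) * xu) < ((n : ℝ) - 1) * (2 * S) := by linarith [h'']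
  have h4 : (n : ℝ) * xu < 2 * S := (mul_lt_mul_iff_right₀ hn1).mp h3
  have hfinal : 0 < S - (n : ℝ) / 2 * xu := by linarith [h4]
  -- conclude
  have hxv : ⟪ρ v, v⟫ = r ^ 2 * xu := by
    rw [hxu, hudef, map_smul, real_inner_smul_left, real_inner_smul_right]
    field_simp
  simp only [LinearMap.sub_apply, LinearMap.smul_apply, LinearMap.id_apply,
    inner_sub_left, real_inner_smul_left]
  rw [real_inner_self_eq_norm_sq, ← hr, hxv]
  nlinarith [mul_pos (pow_pos hrpos 2) hfinal]
end

section
/- Let ρ be a symmetric operator on an n-dimensional real inner product space with trace S, and let n−1 ≤ k < n. If Ein_k = S·id − k·ρ is positive definite, then Sch_{1−(n−1)/k} := ρ − (1−(n−1)/k)·S·id is positive definite. -/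
open RealInnerProductSpace

lemma trace_eq_sum_inner_onb {E : Type*} [NormedAddCommGroup E] [InnerProductSpace ℝ E]
    [FiniteDimensional ℝ E] {ι : Type*} [Fintype ι] [DecidableEq ι]
    (b : OrthonormalBasis ι ℝ E) (A : E →ₗ[ℝ] E) :
    LinearMap.trace ℝ E A = ∑ i, ⟪A (b i), b i⟫ := by
  rw [LinearMap.trace_eq_matrix_trace ℝ b.toBasis, Matrix.trace]
  congr 1
  ext i
  rw [Matrix.diag_apply, LinearMap.toMatrix_apply, OrthonormalBasis.coe_toBasis,
    OrthonormalBasis.coe_toBasis_repr_apply, OrthonormalBasis.repr_apply_apply,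
    real_inner_comm]

lemma inner_lt_trace_mul_norm_sq {E : Type*} [NormedAddCommGroup E] [InnerProductSpace ℝ E]
    [FiniteDimensional ℝ E] (hn : 2 ≤ Module.finrank ℝ E) (A : E →ₗ[ℝ] E)
    (hA : ∀ x : E, x ≠ 0 → 0 < ⟪A x, x⟫) (v : E) (hv : v ≠ 0) :
    ⟪A v, v⟫ < LinearMap.trace ℝ E A * ‖v‖ ^ 2 := by
  classical
  have hv0 : (0:ℝ) < ‖v‖ := norm_pos_iff.mpr hv
  set w : E := ‖v‖⁻¹ • v with hwdef
  have hwn : ‖w‖ = 1 := by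
    rw [hwdef, norm_smul, norm_inv, norm_norm, inv_mul_cancel₀ hv0.ne']
  have hw : Orthonormal ℝ ((↑) : ({w} : Set E) → E) := by
    constructor
    · rintro ⟨x, hx⟩
      simp only [Set.mem_singleton_iff] at hx
      subst hx; exact hwn
    · rintro ⟨x, hx⟩ ⟨y, hy⟩ hne
      simp only [Set.mem_singleton_iff] at hx hy
      exact absurd (Subtype.ext (hx.trans hy.symm)) hne
  obtain ⟨u, b, hwu, hb⟩ := hw.exists_orthonormalBasis_extension
  have hwmem : w ∈ u := hwu rfl
  have hcard : Fintype.card ↥u = Module.finrank ℝ E := by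
    rw [Module.finrank_eq_card_finset_basis b.toBasis]
    exact Fintype.card_coe u
  have htr : LinearMap.trace ℝ E A = ∑ i : ↥u, ⟪A (b i), b i⟫ :=
    trace_eq_sum_inner_onb b A
  set i₀ : ↥u := ⟨w, hwmem⟩
  have hbpos : ∀ i : ↥u, 0 < ⟪A (b i), b i⟫ := by
    intro i
    apply hA
    have := b.orthonormal.1 i
    intro h0
    rw [h0, norm_zero] at this
    norm_num at this
  have hsplit : ∑ i : ↥u, ⟪A (b i), b i⟫
      = ⟪A (b i₀), b i₀⟫ + ∑ i ∈ Finset.univ.erase i₀, ⟪A (b i), b i⟫ :=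
    (Finset.add_sum_erase _ _ (Finset.mem_univ i₀)).symm
  have hne : (Finset.univ.erase i₀).Nonempty := by
    rw [← Finset.card_pos, Finset.card_erase_of_mem (Finset.mem_univ i₀),
      Finset.card_univ, hcard]
    omega
  have hrest : 0 < ∑ i ∈ Finset.univ.erase i₀, ⟪A (b i), b i⟫ :=
    Finset.sum_pos (fun i _ => hbpos i) hne
  have hbi₀ : b i₀ = w := by rw [hb]
  have hAw : ⟪A (b i₀), b i₀⟫ < LinearMap.trace ℝ E A := by
    rw [htr, hsplit]; linarith
  rw [hbi₀] at hAw
  have hAwv : ⟪A w, w⟫ = ‖v‖⁻¹ * (‖v‖⁻¹ * ⟪A v, v⟫) := by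
    rw [hwdef, map_smul, inner_smul_left, inner_smul_right]
    norm_num
  rw [hAwv] at hAw
  have h2 : ⟪A v, v⟫ = ‖v‖ ^ 2 * (‖v‖⁻¹ * (‖v‖⁻¹ * ⟪A v, v⟫)) := by
    field_simp
  rw [h2]
  calc ‖v‖ ^ 2 * (‖v‖⁻¹ * (‖v‖⁻¹ * ⟪A v, v⟫))
      < ‖v‖ ^ 2 * LinearMap.trace ℝ E A := by
        exact mul_lt_mul_of_pos_left hAw (by positivity)
    _ = LinearMap.trace ℝ E A * ‖v‖ ^ 2 := mul_comm _ _

/-- For `n-1 ≤ k < n` (`n ≥ 2`), if `Ein_k = S•id - k•ρ` is positive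
definite then `Sch_{1-(n-1)/k} = ρ - (1-(n-1)/k)·S•id` is positive definite. -/
theorem stmt_14 {E : Type*} [NormedAddCommGroup E] [InnerProductSpace ℝ E]
    [FiniteDimensional ℝ E] {n : ℕ} (hn : Module.finrank ℝ E = n) (hn2 : 2 ≤ n)
    (ρ : E →ₗ[ℝ] E) (hρ : ρ.IsSymmetric) (S : ℝ) (hS : S = LinearMap.trace ℝ E ρ)
    {k : ℝ} (hk1 : (n : ℝ) - 1 ≤ k) (hk2 : k < n)
    (hpos : ∀ v : E, v ≠ 0 →
      0 < ⟪(S • (LinearMap.id : E →ₗ[ℝ] E) - k • ρ) v, v⟫) :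
    ∀ v : E, v ≠ 0 →
      0 < ⟪(ρ - ((1 - ((n : ℝ) - 1) / k) * S) • (LinearMap.id : E →ₗ[ℝ] E)) v, v⟫ := by
  intro v hv
  set A : E →ₗ[ℝ] E := S • (LinearMap.id : E →ₗ[ℝ] E) - k • ρ with hA
  have hk0 : (0:ℝ) < k := by
    have : (1:ℝ) ≤ (n:ℝ) - 1 := by
      have : (2:ℝ) ≤ (n:ℝ) := by exact_mod_cast hn2
      linarith
    linarith
  have htrA : LinearMap.trace ℝ E A = ((n:ℝ) - k) * S := by
    rw [hA, map_sub, map_smul, map_smul, LinearMap.trace_id, hn, ← hS]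
    simp [smul_eq_mul]; ring
  have hlt : ⟪A v, v⟫ < (((n:ℝ) - k) * S) * ‖v‖ ^ 2 := by
    rw [← htrA]
    exact inner_lt_trace_mul_norm_sq (hn ▸ hn2) A hpos v hv
  have hAv : ⟪A v, v⟫ = S * ‖v‖ ^ 2 - k * ⟪ρ v, v⟫ := by
    rw [hA]
    simp only [LinearMap.sub_apply, LinearMap.smul_apply, LinearMap.id_apply,
      inner_sub_left, inner_smul_left, RCLike.conj_to_real,
      real_inner_self_eq_norm_sq]
  have hgoal : ⟪(ρ - ((1 - ((n : ℝ) - 1) / k) * S) • (LinearMap.id : E →ₗ[ℝ] E)) v, v⟫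
      = ⟪ρ v, v⟫ - ((1 - ((n : ℝ) - 1) / k) * S) * ‖v‖ ^ 2 := by
    simp only [LinearMap.sub_apply, LinearMap.smul_apply, LinearMap.id_apply,
      inner_sub_left, inner_smul_left, RCLike.conj_to_real,
      real_inner_self_eq_norm_sq]
  rw [hgoal]
  rw [hAv] at hlt
  have hck : (1 - ((n : ℝ) - 1) / k) * k = k - ((n:ℝ) - 1) := by
    field_simp
  have hx : (k - ((n:ℝ) - 1)) * (S * ‖v‖ ^ 2) < k * ⟪ρ v, v⟫ := by nlinarith [hlt]
  have expand : k * (⟪ρ v, v⟫ - (1 - ((n:ℝ) - 1) / k) * S * ‖v‖ ^ 2)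
      = k * ⟪ρ v, v⟫ - (k - ((n:ℝ) - 1)) * (S * ‖v‖ ^ 2) := by
    field_simp
  have key : 0 < k * (⟪ρ v, v⟫ - (1 - ((n:ℝ) - 1) / k) * S * ‖v‖ ^ 2) := by
    rw [expand]; linarith
  nlinarith [key, hk0]
end
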